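/- The maximal subgroup C₆ of the Frobenius group F₇ = C₇ ⋊ C₆ (with C₆ acting faithfully) is not submodular in F₇, although F₇ belongs to 𝔘₁ and hence every subgroup of F₇ is K𝔘₁-subnormal in F₇. -/
import Mathlib


universe u

/-- A class of groups is subgroup-closed if it is closed under taking subgroups. -/
def IsSubgroupClosed (F : ∀ (G : Type u) [Group G], Prop) : Prop :=
  ∀ (G : Type u) [Group G] (H : Subgroup G), F G → F H

/-- A formation: a class of groups closed under isomorphisms, quotients and
subdirect products. -/
structure IsFormation (F : ∀ (G : Type u) [Group G], Prop) : Prop where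
  iso : ∀ (G H : Type u) [Group G] [Group H], G ≃* H → F G → F H
  quot : ∀ (G : Type u) [Group G] (N : Subgroup G) (_ : N.Normal), F G → F (G ⧸ N)
  subdirect : ∀ (G : Type u) [Group G] (N₁ N₂ : Subgroup G) (_ : N₁.Normal) (_ : N₂.Normal),
    F (G ⧸ N₁) → F (G ⧸ N₂) → N₁ ⊓ N₂ = ⊥ → F G

/-- The 𝔉-fResidual of `G`: the smallest normal subgroup with quotient in `F`. -/
def fResidual (F : ∀ (G : Type u) [Group G], Prop) (G : Type u) [Group G] : Subgroup G :=
  sInf {N : Subgroup G | ∃ _ : N.Normal, F (G ⧸ N)}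

/-- `KSubnormal F H K` : there is a chain `H = H₀ ≤ … ≤ Hₙ = K` of subgroups of `G`
such that each `Hᵢ` is normal in `Hᵢ₊₁` or contains the `F`-fResidual of `Hᵢ₊₁`. -/
inductive KSubnormal (F : ∀ (G : Type u) [Group G], Prop) {G : Type u} [Group G] :
    Subgroup G → Subgroup G → Prop
  | refl (H : Subgroup G) : KSubnormal F H H
  | step {H K L : Subgroup G} : KSubnormal F H K → K ≤ L →
      ((K.subgroupOf L).Normal ∨ fResidual F ↥L ≤ K.subgroupOf L) → KSubnormal F H L

/-- `M` is a modular element of the subgroup lattice of `G`. -/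
def IsModularSubgroup {G : Type u} [Group G] (M : Subgroup G) : Prop :=
  (∀ X Y : Subgroup G, X ≤ Y → (X ⊔ M) ⊓ Y = X ⊔ (M ⊓ Y)) ∧
  (∀ X Y : Subgroup G, M ≤ Y → (M ⊔ X) ⊓ Y = M ⊔ (X ⊓ Y))

/-- `Submodular H K` : a chain from `H` to `K` with each term modular in the next. -/
inductive Submodular {G : Type u} [Group G] : Subgroup G → Subgroup G → Prop
  | refl (H : Subgroup G) : Submodular H H
  | step {H K L : Subgroup G} : Submodular H K → K ≤ L →
      IsModularSubgroup (K.subgroupOf L) → Submodular H L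

/-- `SubnormalIn H K` : a chain from `H` to `K` with each term normal in the next. -/
inductive SubnormalIn {G : Type u} [Group G] : Subgroup G → Subgroup G → Prop
  | refl (H : Subgroup G) : SubnormalIn H H
  | step {H K L : Subgroup G} : SubnormalIn H K → K ≤ L →
      (K.subgroupOf L).Normal → SubnormalIn H L

/-- A group is supersolvable if it has a normal series with cyclic factors:
each term is normal in `G` and each successive term is generated by the previous
one together with a single element. -/
def IsSupersolvable (G : Type u) [Group G] : Prop :=
  ∃ (n : ℕ) (s : Fin (n + 1) → Subgroup G), s 0 = ⊥ ∧ s (Fin.last n) = ⊤ ∧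
    (∀ i, (s i).Normal) ∧
    ∀ i : Fin n, ∃ g : G, s i.succ = s i.castSucc ⊔ Subgroup.zpowers g

/-- The class 𝔘₁ of supersolvable groups of square-free exponent. -/
def U1 : ∀ (G : Type u) [Group G], Prop := fun G _ =>
  IsSupersolvable G ∧ Squarefree (Monoid.exponent G)

/-- The solvable radical: the largest normal solvable subgroup. -/
def solvRad (G : Type u) [Group G] : Subgroup G :=
  sSup {N : Subgroup G | N.Normal ∧ IsSolvable ↥N}

/-- The Fitting subgroup: the largest normal nilpotent subgroup. -/
def fitting (G : Type u) [Group G] : Subgroup G :=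
  sSup {N : Subgroup G | N.Normal ∧ Group.IsNilpotent ↥N}

section Auxiliary

open Subgroup

variable {G : Type u} [Group G]

lemma submodular_le {A B : Subgroup G} (h : Submodular A B) : A ≤ B := by
  induction h with
  | refl => exact le_rfl
  | step _ hKL _ ih => exact ih.trans hKL

lemma mulAut_mul_comm {H : Type*} [Group H] [IsCyclic H] (σ τ : MulAut H) :
    σ * τ = τ * σ := by
  obtain ⟨g, hg⟩ := IsCyclic.exists_generator (α := H)
  have key : ∀ (f : MulAut H) (c : ℤ), f g = g ^ c → ∀ k : ℤ, f (g ^ k) = g ^ (c * k) := by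
    intro f c hc k
    rw [map_zpow, hc, ← zpow_mul, mul_comm]
  obtain ⟨a, ha⟩ := Subgroup.mem_zpowers_iff.mp (hg (σ g))
  obtain ⟨b, hb⟩ := Subgroup.mem_zpowers_iff.mp (hg (τ g))
  ext x
  obtain ⟨m, rfl⟩ := Subgroup.mem_zpowers_iff.mp (hg x)
  rw [MulAut.mul_apply, MulAut.mul_apply, key τ b hb.symm m, key σ a ha.symm (b * m),
    key σ a ha.symm m, key τ b hb.symm (a * m), show a * (b * m) = b * (a * m) by ring]

lemma isSupersolvable_of_mulEquiv {H K : Type u} [Group H] [Group K] (e : H ≃* K)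
    (h : IsSupersolvable H) : IsSupersolvable K := by
  obtain ⟨n, s, h0, hl, hnorm, hgen⟩ := h
  refine ⟨n, fun i => (s i).map e.toMonoidHom, by simp only [h0, Subgroup.map_bot],
    by simp only [hl]; exact Subgroup.map_top_of_surjective _ e.surjective,
    fun i => (hnorm i).map _ e.surjective, fun i => ?_⟩
  obtain ⟨g, hgg⟩ := hgen i
  exact ⟨e g, by simp only [hgg, Subgroup.map_sup, MonoidHom.map_zpowers, MulEquiv.coe_toMonoidHom]⟩

lemma squarefree_42 : Squarefree 42 := by
  rw [Nat.squarefree_iff_prime_squarefree]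
  intro p hp hdvd
  have h1 : p * p ≤ 42 := Nat.le_of_dvd (by norm_num) hdvd
  have h2 : 2 ≤ p := hp.two_le
  have h3 : p ≤ 6 := by nlinarith
  interval_cases p <;> revert hdvd <;> decide

end Auxiliary

/-- In the Frobenius group `F₇ = C₇ ⋊ C₆` (faithful action), the complement `C₆`
is not submodular, although `F₇ ∈ 𝔘₁` and every subgroup is K𝔘₁-subnormal. -/
theorem stmt11 {G : Type u} [Group G] [Finite G] {N Q : Subgroup G}
    (hN : N.Normal) (hcardN : Nat.card N = 7) (hcardQ : Nat.card Q = 6)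
    (hinf : N ⊓ Q = ⊥) (hsup : N ⊔ Q = ⊤)
    (hfaithful : ∀ q ∈ Q, (∀ n ∈ N, q * n * q⁻¹ = n) → q = 1) :
    U1 G ∧ (∀ H : Subgroup G, KSubnormal U1 H ⊤) ∧ ¬ Submodular Q ⊤ := by
  classical
  haveI := hN
  -- cardinality of G
  have hcomp : Subgroup.IsComplement' N Q :=
    Subgroup.isComplement'_of_disjoint_and_mul_eq_univ (disjoint_iff.mpr hinf)
      (by rw [← Subgroup.normal_mul, hsup, Subgroup.coe_top])
  have hG42 : Nat.card G = 42 := by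
    rw [← hcomp.card_mul, hcardN, hcardQ]
  -- a generator of N
  obtain ⟨n₀, hn₀N, hn₀1⟩ : ∃ n ∈ N, n ≠ 1 := by
    by_contra h
    push_neg at h
    have hb : N = ⊥ := (Subgroup.eq_bot_iff_forall N).mpr h
    rw [hb, Subgroup.card_bot] at hcardN
    omega
  have hordn₀ : orderOf n₀ = 7 := by
    have h1 : orderOf n₀ ∣ 7 := hcardN ▸ N.orderOf_dvd_natCard hn₀N
    rcases (Nat.Prime.eq_one_or_self_of_dvd (by norm_num) _ h1) with h | h
    · exact absurd (orderOf_eq_one_iff.mp h) hn₀1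
    · exact h
  have hzn : Subgroup.zpowers n₀ = N := by
    refine Subgroup.eq_of_le_of_card_ge (Subgroup.zpowers_le.mpr hn₀N) ?_
    rw [hcardN, Nat.card_zpowers, hordn₀]
  -- faithfulness via the generator
  have hfix : ∀ q ∈ Q, q * n₀ * q⁻¹ = n₀ → q = 1 := by
    intro q hq hcomm
    refine hfaithful q hq ?_
    intro m hm
    rw [← hzn] at hm
    obtain ⟨k, rfl⟩ := Subgroup.mem_zpowers_iff.mp hm
    calc q * n₀ ^ k * q⁻¹ = (q * n₀ * q⁻¹) ^ k := conj_zpow.symm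
    _ = n₀ ^ k := by rw [hcomm]
  -- Q is commutative (via faithful action on cyclic N)
  haveI : Fact (Nat.Prime 7) := ⟨by norm_num⟩
  haveI : IsCyclic ↥N := isCyclic_of_prime_card hcardN
  have hQcomm : ∀ a b : G, a ∈ Q → b ∈ Q → a * b = b * a := by
    intro a b ha hb
    set φ : ↥Q →* MulAut ↥N := (MulAut.conjNormal (H := N)).comp Q.subtype with hφ
    have hinj : Function.Injective φ := by
      refine (injective_iff_map_eq_one φ).mpr ?_
      rintro ⟨q, hq⟩ h1
      have h2 : ∀ n ∈ N, q * n * q⁻¹ = n := by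
        intro n hn
        have h3 : (MulAut.conjNormal (H := N)) q ⟨n, hn⟩ = ((1 : MulAut ↥N) ⟨n, hn⟩) := by
          rw [show (MulAut.conjNormal (H := N)) q = 1 from h1]
        have h4 := congrArg (Subtype.val) h3
        rw [MulAut.conjNormal_apply] at h4
        simpa using h4
      exact Subtype.ext (hfaithful q hq h2)
    have h5 : φ (⟨a, ha⟩ * ⟨b, hb⟩) = φ (⟨b, hb⟩ * ⟨a, ha⟩) := by
      rw [map_mul, map_mul, mulAut_mul_comm]
    exact congrArg Subtype.val (hinj h5)
  -- a generator of Q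
  haveI : Fintype ↥Q := Fintype.ofFinite _
  haveI : Fact (Nat.Prime 2) := ⟨Nat.prime_two⟩
  haveI : Fact (Nat.Prime 3) := ⟨Nat.prime_three⟩
  obtain ⟨a, ha2⟩ := exists_prime_orderOf_dvd_card (G := ↥Q) 2
    (by rw [← Nat.card_eq_fintype_card, hcardQ]; norm_num)
  obtain ⟨b, hb3⟩ := exists_prime_orderOf_dvd_card (G := ↥Q) 3
    (by rw [← Nat.card_eq_fintype_card, hcardQ]; norm_num)
  have hcab : Commute a b := Subtype.ext (hQcomm ↑a ↑b a.2 b.2)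
  have hord6 : orderOf (a * b) = 6 := by
    rw [Commute.orderOf_mul_eq_mul_orderOf_of_coprime hcab (by rw [ha2, hb3]; decide), ha2, hb3]
  obtain ⟨q₀, hq₀Q, hzq⟩ : ∃ q₀ ∈ Q, Subgroup.zpowers q₀ = Q := by
    have hq₀Q : ((a * b : ↥Q) : G) ∈ Q := (a * b).2
    have hordq₀ : orderOf ((a * b : ↥Q) : G) = 6 := by rw [Subgroup.orderOf_coe]; exact hord6
    refine ⟨((a * b : ↥Q) : G), hq₀Q, ?_⟩
    refine Subgroup.eq_of_le_of_card_ge (Subgroup.zpowers_le.mpr hq₀Q) ?_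
    rw [hcardQ, Nat.card_zpowers, hordq₀]
  -- supersolvability
  have hss : IsSupersolvable G := by
    refine ⟨2, ![⊥, N, ⊤], rfl, rfl, ?_, ?_⟩
    · intro i
      fin_cases i
      · exact (inferInstance : (⊥ : Subgroup G).Normal)
      · exact hN
      · exact (inferInstance : (⊤ : Subgroup G).Normal)
    · intro i
      fin_cases i
      · exact ⟨n₀, by simp [hzn]⟩
      · exact ⟨q₀, by simp [hzq, hsup]⟩
  have hU1 : U1 G :=
    ⟨hss, Squarefree.squarefree_of_dvd (hG42 ▸ Group.exponent_dvd_nat_card)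
      squarefree_42⟩
  -- K𝔘₁-subnormality of every subgroup
  have hK : ∀ H : Subgroup G, KSubnormal U1 H ⊤ := by
    intro H
    refine KSubnormal.step (KSubnormal.refl H) le_top (Or.inr ?_)
    have e : (↥(⊤ : Subgroup G) ⧸ (⊥ : Subgroup ↥(⊤ : Subgroup G))) ≃* G :=
      MulEquiv.trans QuotientGroup.quotientBot Subgroup.topEquiv
    have hbot : fResidual U1 ↥(⊤ : Subgroup G) = ⊥ := by
      refine le_bot_iff.mp (sInf_le ?_)
      refine ⟨inferInstance, isSupersolvable_of_mulEquiv e.symm hss, ?_⟩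
      refine Squarefree.squarefree_of_dvd ?_ squarefree_42
      have hc : Nat.card (↥(⊤ : Subgroup G) ⧸ (⊥ : Subgroup ↥(⊤ : Subgroup G))) = 42 := by
        rw [Nat.card_congr e.toEquiv, hG42]
      exact hc ▸ Group.exponent_dvd_nat_card
    rw [hbot]
    exact bot_le
  -- maximality of Q
  have hdiv : ∀ K : Subgroup G, Q ≤ K → Nat.card K = 6 ∨ Nat.card K = 42 := by
    intro K hQK
    have h6 : 6 ∣ Nat.card K := hcardQ ▸ Subgroup.card_dvd_of_le hQK
    have h42 : Nat.card K ∣ 42 := hG42 ▸ Subgroup.card_subgroup_dvd_card K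
    obtain ⟨k, hk⟩ := h6
    have hk7 : k ∣ 7 := by
      have h67 : 6 * k ∣ 6 * 7 := by rw [← hk]; exact h42
      exact (Nat.mul_dvd_mul_iff_left (by norm_num : 0 < 6)).mp h67
    rcases (Nat.Prime.eq_one_or_self_of_dvd (by norm_num) k hk7) with h | h <;> omega
  have hmax : ∀ K : Subgroup G, Q ≤ K → K = Q ∨ K = ⊤ := by
    intro K hQK
    rcases hdiv K hQK with h | h
    · exact Or.inl (Subgroup.eq_of_le_of_card_ge hQK (by rw [h, hcardQ])).symm
    · exact Or.inr (Subgroup.eq_top_of_card_eq K (by rw [h, hG42]))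
  -- the conjugate Q' of Q by n₀
  set f : G →* G := (MulAut.conj n₀).toMonoidHom with hf
  set Q' : Subgroup G := Q.map f with hQ'def
  have hcardQ' : Nat.card Q' = 6 := by
    rw [← hcardQ]
    exact (Nat.card_congr (Q.equivMapOfInjective f (MulAut.conj n₀).injective).toEquiv).symm
  have hQ'mem : ∀ y : G, y ∈ Q' ↔ ∃ q ∈ Q, n₀ * q * n₀⁻¹ = y := by
    intro y
    simp [hQ'def, Subgroup.mem_map, hf, MulAut.conj_apply]
  have hQQ' : Q ⊓ Q' = ⊥ := by
    rw [Subgroup.eq_bot_iff_forall]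
    intro x hx
    obtain ⟨hxQ, hxQ'⟩ := Subgroup.mem_inf.mp hx
    obtain ⟨q, hqQ, hqx⟩ := (hQ'mem x).mp hxQ'
    have hxqN : x * q⁻¹ ∈ N := by
      have he : x * q⁻¹ = n₀ * (q * n₀⁻¹ * q⁻¹) := by rw [← hqx]; group
      rw [he]
      exact N.mul_mem hn₀N (hN.conj_mem _ (N.inv_mem hn₀N) q)
    have hxqQ : x * q⁻¹ ∈ Q := Q.mul_mem hxQ (Q.inv_mem hqQ)
    have h1 : x * q⁻¹ = 1 := by
      have hmem : x * q⁻¹ ∈ N ⊓ Q := ⟨hxqN, hxqQ⟩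
      rwa [hinf, Subgroup.mem_bot] at hmem
    have hxeq : x = q := by
      rw [mul_inv_eq_one] at h1; exact h1
    have h2 : n₀ * q = q * n₀ := by
      have h3 := hqx.trans hxeq
      rwa [mul_inv_eq_iff_eq_mul] at h3
    have hcomm : q * n₀ * q⁻¹ = n₀ := by rw [← h2]; group
    rw [hxeq, hfix q hqQ hcomm]
  -- an element of order 2 in Q'
  haveI : Fintype ↥Q' := Fintype.ofFinite _
  obtain ⟨u, hu2⟩ := exists_prime_orderOf_dvd_card (G := ↥Q') 2
    (by rw [← Nat.card_eq_fintype_card, hcardQ']; norm_num)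
  have hxQ' : (u : G) ∈ Q' := u.2
  have hordx : orderOf (u : G) = 2 := by rw [Subgroup.orderOf_coe]; exact hu2
  have hxne1 : (u : G) ≠ 1 := by
    intro h
    rw [h, orderOf_one] at hordx
    omega
  have hxQ : (u : G) ∉ Q := by
    intro hmem
    have hmem2 : (u : G) ∈ Q ⊓ Q' := ⟨hmem, hxQ'⟩
    rw [hQQ', Subgroup.mem_bot] at hmem2
    exact hxne1 hmem2
  set X : Subgroup G := Subgroup.zpowers (u : G) with hXdef
  have hXQ' : X ≤ Q' := Subgroup.zpowers_le.mpr hxQ'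
  have hcardX : Nat.card X = 2 := by rw [hXdef, Nat.card_zpowers, hordx]
  have hXQtop : X ⊔ Q = ⊤ := by
    rcases hdiv (X ⊔ Q) le_sup_right with h | h
    · exfalso
      have hQeq : Q = X ⊔ Q := Subgroup.eq_of_le_of_card_ge le_sup_right (by rw [h, hcardQ])
      have hmem : (u : G) ∈ X ⊔ Q := Subgroup.mem_sup_left (Subgroup.mem_zpowers _)
      rw [← hQeq] at hmem
      exact hxQ hmem
    · exact Subgroup.eq_top_of_card_eq _ (by rw [h, hG42])
  -- Q is not modular in G
  have hnotmod : ¬ IsModularSubgroup (Q.subgroupOf (⊤ : Subgroup G)) := by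
    intro hmod
    have hle' : X.subgroupOf (⊤ : Subgroup G) ≤ Q'.subgroupOf (⊤ : Subgroup G) :=
      Subgroup.comap_mono hXQ'
    have h := hmod.1 (X.subgroupOf ⊤) (Q'.subgroupOf ⊤) hle'
    have h2 := congrArg (Subgroup.map (⊤ : Subgroup G).subtype) h
    rw [Subgroup.map_inf _ _ _ (⊤ : Subgroup G).subtype_injective, Subgroup.map_sup,
      Subgroup.map_sup, Subgroup.map_inf _ _ _ (⊤ : Subgroup G).subtype_injective,
      Subgroup.subgroupOf_map_subtype, Subgroup.subgroupOf_map_subtype,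
      Subgroup.subgroupOf_map_subtype, inf_top_eq, inf_top_eq, inf_top_eq] at h2
    rw [hXQtop, top_inf_eq, hQQ', sup_bot_eq] at h2
    rw [h2, hcardX] at hcardQ'
    omega
  refine ⟨hU1, hK, ?_⟩
  intro hsub
  have hQtop : Q ≠ ⊤ := by
    intro h
    rw [h, Subgroup.card_top, hG42] at hcardQ
    omega
  have main : ∀ A L : Subgroup G, Submodular A L → A = Q → L = ⊤ → False := by
    intro A L h
    induction h with
    | refl => exact fun h1 h2 => hQtop (h1.symm.trans h2)
    | step h1 h2 h3 ih =>
      intro hA hL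
      subst hA
      subst hL
      rcases hmax _ (submodular_le h1) with hKQ | hKt
      · subst hKQ
        exact hnotmod h3
      · exact ih rfl hKt
  exact main Q ⊤ hsub rfl rfl
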